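/- arXiv:2505.15611 — 3 statements merged into one kernel-verified Lean document; each statement's English description precedes it below -/
import Mathlib

section
/- For fixed y with k < y < h, the function λ ↦ (e^{-λy} - e^{-λk})/(e^{-λh} - e^{-λk}) is strictly increasing in λ for λ > 0. -/
theorem stmt_3 (k y h : ℝ) (hky : k < y) (hyh : y < h) :
    StrictMonoOn (fun lam : ℝ =>
      (Real.exp (-lam * y) - Real.exp (-lam * k)) /
        (Real.exp (-lam * h) - Real.exp (-lam * k))) (Set.Ioi 0) := by
  have hkh : k < h := hky.trans hyh
  have hD : ∀ l : ℝ, l ∈ Set.Ioi (0:ℝ) →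
      Real.exp (-l*h) - Real.exp (-l*k) ≠ 0 := by
    intro l hl
    have hl0 : (0:ℝ) < l := hl
    have : Real.exp (-l*h) < Real.exp (-l*k) := by
      apply Real.exp_lt_exp.2
      nlinarith
    linarith
  apply strictMonoOn_of_deriv_pos (convex_Ioi 0)
  · apply ContinuousOn.div
    · exact (Real.continuous_exp.comp (by continuity)).continuousOn.sub
        (Real.continuous_exp.comp (by continuity)).continuousOn
    · exact (Real.continuous_exp.comp (by continuity)).continuousOn.sub
        (Real.continuous_exp.comp (by continuity)).continuousOn
    · exact hD
  · intro x hx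
    rw [interior_Ioi] at hx
    have hx0 : (0:ℝ) < x := hx
    have ederiv : ∀ c : ℝ, HasDerivAt (fun l : ℝ => Real.exp (-l*c))
        (Real.exp (-x*c) * (-c)) x := by
      intro c
      have h1 : HasDerivAt (fun l : ℝ => -l*c) (-c) x := by
        simpa using ((hasDerivAt_id x).neg.mul_const c)
      exact h1.exp
    have hN : HasDerivAt (fun l : ℝ => Real.exp (-l*y) - Real.exp (-l*k))
        (Real.exp (-x*y) * (-y) - Real.exp (-x*k) * (-k)) x := (ederiv y).sub (ederiv k)
    have hDd : HasDerivAt (fun l : ℝ => Real.exp (-l*h) - Real.exp (-l*k))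
        (Real.exp (-x*h) * (-h) - Real.exp (-x*k) * (-k)) x := (ederiv h).sub (ederiv k)
    have hQ := hN.div hDd (hD x hx)
    rw [(show HasDerivAt (fun lam : ℝ => (Real.exp (-lam * y) - Real.exp (-lam * k)) / (Real.exp (-lam * h) - Real.exp (-lam * k))) _ x from hQ).deriv]
    apply div_pos
    · -- numerator positivity via strict convexity of exp
      set A := Real.exp (-x*y) with hA
      set B := Real.exp (-x*k) with hB
      set C := Real.exp (-x*h) with hC
      have hABpos : 0 < A := Real.exp_pos _
      have hBpos : 0 < B := Real.exp_pos _
      have hCpos : 0 < C := Real.exp_pos _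
      have hne : -x*(y+h) ≠ -x*(y+k) := by
        intro hcontra
        have hxx : x * (y+h) = x * (y+k) := by linarith
        have : y + h = y + k := mul_left_cancel₀ (ne_of_gt hx0) hxx
        linarith
      have hpa : 0 < (h-y)/(h-k) := div_pos (by linarith) (by linarith)
      have hpb : 0 < (y-k)/(h-k) := div_pos (by linarith) (by linarith)
      have hab : (h-y)/(h-k) + (y-k)/(h-k) = 1 := by
        rw [← add_div]
        rw [show h - y + (y - k) = h - k by ring]
        exact div_self (sub_ne_zero.mpr hkh.ne')
      have key := strictConvexOn_exp.2 (Set.mem_univ (-x*(y+h)))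
        (Set.mem_univ (-x*(y+k))) hne hpa hpb hab
      simp only [smul_eq_mul] at key
      have harg : (h-y)/(h-k) * (-x*(y+h)) + (y-k)/(h-k) * (-x*(y+k)) = -x*(k+h) := by
        rw [div_mul_eq_mul_div, div_mul_eq_mul_div, ← add_div,
          div_eq_iff (by linarith : h - k ≠ 0)]
        ring
      rw [harg] at key
      have hAC : Real.exp (-x*(y+h)) = A * C := by
        rw [hA, hC, ← Real.exp_add]; ring_nf
      have hAB : Real.exp (-x*(y+k)) = A * B := by
        rw [hA, hB, ← Real.exp_add]; ring_nf
      have hBC : Real.exp (-x*(k+h)) = B * C := by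
        rw [hB, hC, ← Real.exp_add]; ring_nf
      rw [hAC, hAB, hBC] at key
      -- key : B*C < (h-y)/(h-k) * (A*C) + (y-k)/(h-k) * (A*B)
      have key2 : (h-k) * (B*C) < (h-y) * (A*C) + (y-k) * (A*B) := by
        have hhk : (0:ℝ) < h - k := by linarith
        have := mul_lt_mul_of_pos_left key hhk
        calc (h-k) * (B*C) < (h-k) * ((h-y)/(h-k) * (A*C) + (y-k)/(h-k) * (A*B)) := this
          _ = (h-y) * (A*C) + (y-k) * (A*B) := by field_simp
      nlinarith [key2]
    · rw [← sq_abs]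
      exact pow_pos (abs_pos.mpr (hD x hx)) 2
end

section
/- For all t ∈ (0, T], the P1 optimal inventory is strictly below the P0 optimal inventory: Q₀ e^{-(2γ-b)t/(2l)} < Q₀ (2l + (2γ-b)(T-t))/(2l + (2γ-b)T). -/
theorem stmt_9 (l γ b T Q₀ : ℝ) (hl : 0 < l) (hgb : 0 < 2 * γ - b)
    (hT : 0 < T) (hQ : 0 < Q₀) :
    ∀ t : ℝ, 0 < t → t ≤ T →
      Q₀ * Real.exp (-(2 * γ - b) * t / (2 * l)) <
        Q₀ * (2 * l + (2 * γ - b) * (T - t)) / (2 * l + (2 * γ - b) * T) := by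
  intro t ht htT
  set c := 2 * γ - b with hc
  have h2l : 0 < 2 * l := by linarith
  have hx : 0 < c * t / (2 * l) := by positivity
  have hexp : 1 + c * t / (2 * l) < Real.exp (c * t / (2 * l)) := by
    have := Real.add_one_lt_exp (ne_of_gt hx); linarith
  have hkey : Real.exp (-c * t / (2 * l)) < (1 + c * t / (2 * l))⁻¹ := by
    have h1 : Real.exp (-c * t / (2 * l)) = (Real.exp (c * t / (2 * l)))⁻¹ := by
      rw [← Real.exp_neg]; ring_nf
    rw [h1]
    exact inv_strictAnti₀ (by linarith) hexp
  have hden : 0 < 2 * l + c * T := by nlinarith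
  have h2 : (1 + c * t / (2 * l))⁻¹ ≤ (2 * l + c * (T - t)) / (2 * l + c * T) := by
    rw [inv_eq_one_div, div_le_div_iff₀ (by positivity) hden]
    have h3 : (1 + c * t / (2 * l)) = (2 * l + c * t) / (2 * l) := by
      field_simp
    rw [h3]
    rw [mul_div_assoc', le_div_iff₀ h2l]
    nlinarith [mul_nonneg (mul_nonneg hgb.le ht.le) (sub_nonneg.mpr htT),
      mul_pos hgb ht]
  have := hkey.trans_le h2
  calc Q₀ * Real.exp (-c * t / (2 * l)) < Q₀ * ((2 * l + c * (T - t)) / (2 * l + c * T)) := by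
        exact (mul_lt_mul_iff_right₀ hQ).mpr this
    _ = Q₀ * (2 * l + c * (T - t)) / (2 * l + c * T) := by ring
end

section
/- For the Almgren-Chriss solution with Γ = √(φ/l) and ζ = (γ - b/2 + √(lφ))/(γ - b/2 - √(lφ)), assuming γ - b/2 > √(lφ) > 0, one has ζ > 1, and the inventory Q*(t) = Q₀(ζ e^{Γ(T-t)} - e^{-Γ(T-t)})/(ζ e^{ΓT} - e^{-ΓT}) is strictly positive and strictly decreasing on [0,T]. -/
theorem stmt_16 (l φ T Q₀ γ b : ℝ) (hl : 0 < l) (hφ : 0 < φ) (hT : 0 < T)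
    (hQ : 0 < Q₀) (hζ : Real.sqrt (l * φ) < γ - b / 2) :
    let Γ := Real.sqrt (φ / l)
    let ζ := (γ - b / 2 + Real.sqrt (l * φ)) / (γ - b / 2 - Real.sqrt (l * φ))
    let Q : ℝ → ℝ := fun t =>
      Q₀ * (ζ * Real.exp (Γ * (T - t)) - Real.exp (-Γ * (T - t))) /
        (ζ * Real.exp (Γ * T) - Real.exp (-Γ * T))
    1 < ζ ∧ (∀ t ∈ Set.Icc (0 : ℝ) T, 0 < Q t)
      ∧ StrictAntiOn Q (Set.Icc 0 T) := by
  intro Γ ζ Q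
  have hs : 0 < Real.sqrt (l * φ) := Real.sqrt_pos.mpr (by positivity)
  have hden : 0 < γ - b / 2 - Real.sqrt (l * φ) := by linarith
  have hζ1 : 1 < ζ := by
    rw [lt_div_iff₀ hden]; linarith
  have hΓ : 0 < Γ := Real.sqrt_pos.mpr (by positivity)
  -- positivity of numerator-type expression for s ≥ 0
  have hf : ∀ s : ℝ, 0 ≤ s → 0 < ζ * Real.exp (Γ * s) - Real.exp (-Γ * s) := by
    intro s hs0
    have h1 : Real.exp (-Γ * s) ≤ Real.exp (Γ * s) := by
      apply Real.exp_le_exp.mpr; nlinarith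
    have h2 : 0 < Real.exp (Γ * s) := Real.exp_pos _
    nlinarith
  have hD : 0 < ζ * Real.exp (Γ * T) - Real.exp (-Γ * T) := hf T hT.le
  refine ⟨hζ1, ?_, ?_⟩
  · intro t ht
    have h := hf (T - t) (by linarith [ht.2])
    exact div_pos (mul_pos hQ h) hD
  · intro t1 ht1 t2 ht2 h12
    simp only [Q]
    rw [div_lt_div_iff₀ hD hD]
    have e1 : Real.exp (Γ * (T - t2)) < Real.exp (Γ * (T - t1)) := by
      apply Real.exp_lt_exp.mpr; nlinarith
    have e2 : Real.exp (-Γ * (T - t1)) < Real.exp (-Γ * (T - t2)) := by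
      apply Real.exp_lt_exp.mpr; nlinarith
    have hN : ζ * Real.exp (Γ * (T - t2)) - Real.exp (-Γ * (T - t2)) <
        ζ * Real.exp (Γ * (T - t1)) - Real.exp (-Γ * (T - t1)) := by nlinarith
    nlinarith [mul_pos hQ hD, hN]
end
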